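/- Let α ∈ ℝ, τ > 0, h > 0 and let ρ, u, x, p : ℤ × ℤ → ℝ be grid functions with ρ(n,i) > 0, p(n,i) > 0, 2√(p(n,i)) − ρ(n,i) ≠ 0, and the bracket D(n,i) = 4/(ρ(n,i)ρ(n−1,i)) − (2/√(p(n,i)))(1/ρ(n,i) + 1/ρ(n−1,i)) + 1/p(n,i) ≠ 0 for all (n,i), satisfying the two-layer scheme in mass Lagrangian coordinates with horizontal bottom: (i) (ρ(n,i) − ρ(n−1,i))/τ + (1/2) ρ(n,i) ρ(n−1,i) [ (u(n,i+1) − u(n,i))/h + (u(n−1,i+1) − u(n−1,i))/h ] = 0; (ii) (u(n,i) − u(n−1,i))/τ + (Q(n,i) − Q(n,i−1))/h = 0, where Q(n,i) = 1/D(n,i) − α²/√(p(n,i)); (iii) (x(n+1,i) − x(n,i))/τ = u(n,i); (iv) (x(n−1,i+1) − x(n−1,i))/h + (x(n,i+1) − x(n,i))/h = 1/√(p(n−1,i)) + 1/√(p(n,i)) = 2/ρ(n−1,i); for all (n,i). Define E(n,i) = u(n,i)²/2 + p(n,i)/(2√(p(n,i)) − ρ(n,i)) + α²(2√(p(n,i))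 − ρ(n,i))/(2 p(n,i) ρ(n,i)) and S(n,i) = (1/2)(u(n,i+1) + u(n−1,i+1)) Q(n,i). Then the finite-difference conservation law of energy holds: (E(n,i) − E(n−1,i))/τ + (S(n,i) − S(n,i−1))/h = 0 for all (n,i). -/

import Mathlib

set_option maxHeartbeats 2000000


/-- The bracket D appearing in the flux of the two-layer mass Lagrangian scheme. -/
noncomputable def Dbr (ρ p : ℤ → ℤ → ℝ) (n i : ℤ) : ℝ :=
  4 / (ρ n i * ρ (n - 1) i)
    - (2 / Real.sqrt (p n i)) * (1 / ρ n i + 1 / ρ (n - 1) i)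
    + 1 / p n i

/-- The flux quantity Q of the two-layer mass Lagrangian scheme. -/
noncomputable def Qfl (α : ℝ) (ρ p : ℤ → ℤ → ℝ) (n i : ℤ) : ℝ :=
  1 / Dbr ρ p n i - α ^ 2 / Real.sqrt (p n i)

/-- The energy density E of the two-layer mass Lagrangian scheme. -/
noncomputable def Een (α : ℝ) (ρ u p : ℤ → ℤ → ℝ) (n i : ℤ) : ℝ :=
  (u n i) ^ 2 / 2 + p n i / (2 * Real.sqrt (p n i) - ρ n i)
    + α ^ 2 * (2 * Real.sqrt (p n i) - ρ n i) / (2 * p n i * ρ n i)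

/-- The energy flux S of the two-layer mass Lagrangian scheme. -/
noncomputable def Sen (α : ℝ) (ρ u p : ℤ → ℤ → ℝ) (n i : ℤ) : ℝ :=
  (1 / 2) * (u n (i + 1) + u (n - 1) (i + 1)) * Qfl α ρ p n i

/-- finite-difference energy conservation law for the two-layer
invariant scheme for the SMHD equations in mass Lagrangian coordinates with
horizontal bottom. -/
theorem fd_mass_lagrangian_energy
    (α τ h : ℝ) (hτ : 0 < τ) (hh : 0 < h)
    (ρ u x p : ℤ → ℤ → ℝ)
    (hρ : ∀ n i, 0 < ρ n i)
    (hp : ∀ n i, 0 < p n i)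
    (hsr : ∀ n i, 2 * Real.sqrt (p n i) - ρ n i ≠ 0)
    (hD : ∀ n i, Dbr ρ p n i ≠ 0)
    (hcont : ∀ n i : ℤ,
      (ρ n i - ρ (n - 1) i) / τ
        + (1 / 2) * ρ n i * ρ (n - 1) i
          * ((u n (i + 1) - u n i) / h + (u (n - 1) (i + 1) - u (n - 1) i) / h) = 0)
    (hmom : ∀ n i : ℤ,
      (u n i - u (n - 1) i) / τ + (Qfl α ρ p n i - Qfl α ρ p n (i - 1)) / h = 0)
    (hkin : ∀ n i : ℤ, (x (n + 1) i - x n i) / τ = u n i)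
    (hstate : ∀ n i : ℤ,
      (x (n - 1) (i + 1) - x (n - 1) i) / h + (x n (i + 1) - x n i) / h
          = 1 / Real.sqrt (p (n - 1) i) + 1 / Real.sqrt (p n i) ∧
      1 / Real.sqrt (p (n - 1) i) + 1 / Real.sqrt (p n i) = 2 / ρ (n - 1) i) :
    ∀ n i : ℤ,
      (Een α ρ u p n i - Een α ρ u p (n - 1) i) / τ
        + (Sen α ρ u p n i - Sen α ρ u p n (i - 1)) / h = 0 := by
  intro n i
  have hτ0 : τ ≠ 0 := ne_of_gt hτ
  have hh0 : h ≠ 0 := ne_of_gt hh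
  have ha0 : ρ n i ≠ 0 := ne_of_gt (hρ n i)
  have hb0 : ρ (n - 1) i ≠ 0 := ne_of_gt (hρ (n - 1) i)
  have hr0 : Real.sqrt (p n i) ≠ 0 := ne_of_gt (Real.sqrt_pos.mpr (hp n i))
  have hr'0 : Real.sqrt (p (n - 1) i) ≠ 0 := ne_of_gt (Real.sqrt_pos.mpr (hp (n - 1) i))
  have hrs : 0 < Real.sqrt (p n i) + Real.sqrt (p (n - 1) i) :=
    add_pos (Real.sqrt_pos.mpr (hp n i)) (Real.sqrt_pos.mpr (hp (n - 1) i))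
  have hrs0 : Real.sqrt (p n i) + Real.sqrt (p (n - 1) i) ≠ 0 := ne_of_gt hrs
  set r : ℝ := Real.sqrt (p n i) with hrdef
  set r' : ℝ := Real.sqrt (p (n - 1) i) with hr'def
  have hP : p n i = r ^ 2 := (Real.sq_sqrt (hp n i).le).symm
  have hP' : p (n - 1) i = r' ^ 2 := (Real.sq_sqrt (hp (n - 1) i).le).symm
  -- state equation
  have hb := (hstate n i).2
  have hbval : ρ (n - 1) i = 2 * r * r' / (r + r') := by
    have hb' : ρ (n - 1) i * (r + r') = 2 * (r * r') := by
      rw [← hrdef, ← hr'def] at hb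
      field_simp at hb
      linarith [hb]
    field_simp
    linarith [hb']
  -- value of the bracket D
  have hDval : Dbr ρ p n i = (2 * r - ρ n i) / (ρ n i * r * r') := by
    rw [Dbr, ← hrdef, hP, hbval]
    field_simp
    ring
  -- value of the flux Q
  have hQ : Qfl α ρ p n i = ρ n i * r * r' / (2 * r - ρ n i) - α ^ 2 / r := by
    rw [Qfl, hDval, ← hrdef, one_div_div]
  -- momentum: express Q at i-1
  have hQm : Qfl α ρ p n (i - 1) =
      Qfl α ρ p n i + h * (u n i - u (n - 1) i) / τ := by
    have H := hmom n i
    field_simp at H ⊢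
    linarith [H]
  -- continuity: express u n (i+1)
  have hu2 : u n (i + 1) = u n i + u (n - 1) i - u (n - 1) (i + 1)
      + 2 * (ρ (n - 1) i - ρ n i) * h / (τ * ρ n i * ρ (n - 1) i) := by
    have H := hcont n i
    field_simp at H ⊢
    linarith [H]
  -- nonvanishing of 2r - a and 2r' - b
  have hsra : 2 * r - ρ n i ≠ 0 := hsr n i
  have hsrb : 2 * r' - ρ (n - 1) i ≠ 0 := hsr (n - 1) i
  rw [hbval] at hsrb hu2
  simp only [Een, Sen]
  rw [hQm, hQ, hu2, ← hrdef, ← hr'def, hP, hP', hbval]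
  field_simp
  ring_nf
  field_simp
  ring
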